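/- arXiv:2508.18668 — 2 statements merged into one kernel-verified Lean document; each statement's English description precedes it below -/
import Mathlib

section
/- Fix a real number α ≠ 0 and integer n ≥ 1. Define S_α(n,k) = (1/(α^k k!)) Σ_{j=0}^{k} (−1)^j binom(k,j) (−jα)_n for 1 ≤ k ≤ n, where (y)_n = y(y+1)⋯(y+n−1). Then for every real x: (x)_n = Σ_{k=1}^n S_α(n,k) ∏_{i=0}^{k−1} (x + iα). -/
open Finset

/-- generalized Stirling number S_α(n,k) of Pitman -/
noncomputable def genStirling (α : ℝ) (n k : ℕ) : ℝ :=
  (1 / (α ^ k * (Nat.factorial k : ℝ))) *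
    ∑ j ∈ Finset.range (k + 1),
      (-1 : ℝ) ^ j * (Nat.choose k j : ℝ) * ∏ i ∈ Finset.range n, (-(j : ℝ) * α + i)

noncomputable def Dsum (α : ℝ) (n k : ℕ) : ℝ :=
  ∑ j ∈ Finset.range (k + 1),
    (-1 : ℝ) ^ j * (Nat.choose k j : ℝ) * ∏ i ∈ Finset.range n, (-(j : ℝ) * α + i)

lemma Dsum_rec (α : ℝ) (n : ℕ) (k : ℕ) (hk : 1 ≤ k) :
    Dsum α (n + 1) k = ((n : ℝ) - k * α) * Dsum α n k + k * α * Dsum α n (k - 1) := by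
  obtain ⟨m, rfl⟩ := Nat.exists_eq_succ_of_ne_zero (by omega : k ≠ 0)
  simp only [Dsum, Nat.add_sub_cancel, Nat.succ_sub_one, prod_range_succ]
  have key : ∀ j ∈ Finset.range (m + 1 + 1),
      (-1 : ℝ) ^ j * ((m + 1).choose j : ℝ) *
        ((∏ i ∈ Finset.range n, (-(j : ℝ) * α + i)) * (-(j : ℝ) * α + n))
      = ((n : ℝ) - ((m + 1 : ℕ) : ℝ) * α) *
          ((-1 : ℝ) ^ j * ((m + 1).choose j : ℝ) * ∏ i ∈ Finset.range n, (-(j : ℝ) * α + i))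
        + ((m + 1 : ℕ) : ℝ) * α *
          ((-1 : ℝ) ^ j * ((((m + 1) - j : ℕ) : ℝ) * ((m + 1).choose j : ℝ) / ((m + 1 : ℕ) : ℝ))
            * ∏ i ∈ Finset.range n, (-(j : ℝ) * α + i)) := by
    intro j hj
    simp only [mem_range] at hj
    have hj' : j ≤ m + 1 := by omega
    have hcast : (((m + 1) - j : ℕ) : ℝ) = ((m + 1 : ℕ) : ℝ) - j := by
      push_cast [Nat.cast_sub hj']; ring
    rw [hcast]
    have h1m : ((m + 1 : ℕ) : ℝ) ≠ 0 := by positivity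
    field_simp
    ring
  rw [Finset.sum_congr rfl key, Finset.sum_add_distrib, ← Finset.mul_sum, ← Finset.mul_sum]
  congr 1
  congr 1
  rw [Finset.sum_range_succ]
  have hz : ((m + 1) - (m + 1) : ℕ) = 0 := by omega
  rw [hz]
  simp only [Nat.cast_zero, zero_mul, zero_div, mul_zero, add_zero]
  apply Finset.sum_congr rfl
  intro j hj
  simp only [mem_range] at hj
  congr 2
  have h := Nat.choose_mul_succ_eq m j
  have hcast : ((m.choose j : ℕ) : ℝ) * ((m + 1 : ℕ) : ℝ)
      = ((m + 1).choose j : ℝ) * ((((m + 1) - j : ℕ)) : ℝ) := by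
    exact_mod_cast congrArg (Nat.cast : ℕ → ℝ) h
  have h1m : ((m + 1 : ℕ) : ℝ) ≠ 0 := by positivity
  rw [div_eq_iff h1m]
  linarith [hcast]

lemma Dsum_zero_of_lt (α : ℝ) : ∀ n k, n < k → Dsum α n k = 0 := by
  intro n
  induction n with
  | zero =>
    intro k hk
    simp only [Dsum, Finset.range_zero, Finset.prod_empty, mul_one]
    have := Int.alternating_sum_range_choose (n := k)
    have hk0 : k ≠ 0 := by omega
    rw [if_neg hk0] at this
    exact_mod_cast congrArg (Int.cast : ℤ → ℝ) this
  | succ n ih =>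
    intro k hk
    have hk1 : 1 ≤ k := by omega
    rw [Dsum_rec α n k hk1, ih k (by omega), ih (k - 1) (by omega)]
    ring

lemma main_aux (α : ℝ) (hα : α ≠ 0) (n : ℕ) (x : ℝ) :
    (∏ i ∈ Finset.range n, (x + i))
      = ∑ k ∈ Finset.range (n + 1),
          (Dsum α n k / (α ^ k * (Nat.factorial k : ℝ))) * ∏ i ∈ Finset.range k, (x + i * α) := by
  induction n with
  | zero => simp [Dsum]
  | succ n ih =>
    rw [prod_range_succ, ih, Finset.sum_mul]
    have step : ∀ k ∈ Finset.range (n + 1),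
        (Dsum α n k / (α ^ k * (k.factorial : ℝ))) * (∏ i ∈ Finset.range k, (x + i * α)) * (x + n)
        = (Dsum α n k / (α ^ k * (k.factorial : ℝ))) * (∏ i ∈ Finset.range (k+1), (x + i * α))
          + ((n : ℝ) - k * α) * (Dsum α n k / (α ^ k * (k.factorial : ℝ)))
              * (∏ i ∈ Finset.range k, (x + i * α)) := by
      intro k _
      rw [prod_range_succ]
      ring
    rw [Finset.sum_congr rfl step, Finset.sum_add_distrib]
    have e1 : ∑ k ∈ Finset.range (n + 1),
        (Dsum α n k / (α ^ k * (k.factorial : ℝ))) * (∏ i ∈ Finset.range (k+1), (x + i * α))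
        = ∑ k ∈ Finset.range (n + 2), (if k = 0 then 0 else
            (Dsum α n (k-1) / (α ^ (k-1) * ((k-1).factorial : ℝ)))
              * (∏ i ∈ Finset.range k, (x + i * α))) := by
      rw [Finset.sum_range_succ' (fun k => if k = 0 then (0:ℝ) else
            (Dsum α n (k-1) / (α ^ (k-1) * ((k-1).factorial : ℝ)))
              * (∏ i ∈ Finset.range k, (x + i * α))) (n+1)]
      simp
    have e2 : ∑ k ∈ Finset.range (n + 1),
        ((n : ℝ) - k * α) * (Dsum α n k / (α ^ k * (k.factorial : ℝ)))
            * (∏ i ∈ Finset.range k, (x + i * α))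
        = ∑ k ∈ Finset.range (n + 2),
        ((n : ℝ) - k * α) * (Dsum α n k / (α ^ k * (k.factorial : ℝ)))
            * (∏ i ∈ Finset.range k, (x + i * α)) := by
      rw [Finset.sum_range_succ
        (fun k => ((n : ℝ) - k * α) * (Dsum α n k / (α ^ k * (k.factorial : ℝ)))
            * (∏ i ∈ Finset.range k, (x + i * α))) (n+1)]
      rw [Dsum_zero_of_lt α n (n+1) (by omega)]
      simp
    rw [e1, e2, ← Finset.sum_add_distrib]
    apply Finset.sum_congr rfl
    intro k hk
    by_cases hk0 : k = 0
    · subst hk0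
      have h1 : Dsum α (n+1) 0 = Dsum α n 0 * (n : ℝ) := by
        simp [Dsum, prod_range_succ]
      rw [if_pos rfl]
      simp only [Nat.cast_zero, zero_mul, sub_zero, pow_zero,
        Nat.factorial_zero, Nat.cast_one, mul_one, Finset.range_zero, Finset.prod_empty,
        zero_add, div_one]
      linarith [h1]
    · rw [if_neg hk0]
      have hk1 : 1 ≤ k := by omega
      rw [← add_mul]
      congr 1
      rw [Dsum_rec α n k hk1]
      have hf : (k.factorial : ℝ) ≠ 0 := by exact_mod_cast k.factorial_ne_zero
      have hf' : ((k-1).factorial : ℝ) ≠ 0 := by exact_mod_cast (k-1).factorial_ne_zero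
      have hpow : (α : ℝ) ^ k ≠ 0 := pow_ne_zero _ hα
      have hpow' : (α : ℝ) ^ (k-1) ≠ 0 := pow_ne_zero _ hα
      have hfac : (k.factorial : ℝ) = k * ((k-1).factorial : ℝ) := by
        obtain ⟨m, rfl⟩ := Nat.exists_eq_succ_of_ne_zero (by omega : k ≠ 0)
        simp only [Nat.succ_sub_one]
        push_cast [Nat.factorial_succ]
        ring
      have hpk : α ^ k = α * α ^ (k-1) := by
        conv_lhs => rw [show k = (k-1) + 1 by omega]
        rw [pow_succ]; ring
      have hk0' : (k : ℝ) ≠ 0 := by exact_mod_cast hk0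
      field_simp [hfac, hpk]
      rw [hpk, hfac]
      ring

/-- connection-coefficient identity for generalized Stirling numbers:
(x)_n = Σ_{k=1}^n S_α(n,k) ∏_{i=0}^{k−1}(x + iα), where (x)_n = ∏_{i=0}^{n-1}(x+i). -/
theorem genStirling_connection (α : ℝ) (hα : α ≠ 0) (n : ℕ) (hn : 1 ≤ n) (x : ℝ) :
    (∏ i ∈ Finset.range n, (x + i))
      = ∑ k ∈ Finset.Icc 1 n,
          genStirling α n k * ∏ i ∈ Finset.range k, (x + i * α) := by
  have h := main_aux α hα n x
  rw [h]
  have hIcc : Finset.Icc 1 n = Finset.range (n+1) \ {0} := by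
    ext k; simp [Finset.mem_Icc, Finset.mem_range, Finset.mem_sdiff]; omega
  rw [hIcc, Finset.sum_sdiff_eq_sub (by simp)]
  have h0 : Dsum α n 0 = 0 := by
    have hz : (∏ i ∈ Finset.range n, ((i : ℝ))) = 0 :=
      Finset.prod_eq_zero (i := 0) (Finset.mem_range.2 hn) (by norm_num)
    simpa [Dsum] using hz
  have hgs : ∀ k, genStirling α n k = Dsum α n k / (α ^ k * (Nat.factorial k : ℝ)) := by
    intro k
    simp only [genStirling, Dsum, one_div, div_eq_mul_inv]
    ring
  simp only [hgs]
  simp [h0]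
end

section
/- For 0 < α < 1, integer n ≥ 1 and γ > 0: d^n/dγ^n (e^{−γ^α}) = (−1)^n e^{−γ^α} Σ_{k=1}^n α^k S_α(n,k) γ^{kα−n}, where S_α(n,k) = (1/(α^k k!)) Σ_{j=0}^{k} (−1)^j binom(k,j)(−jα)_n. -/
open Finset Real

lemma alt_diff_step (k : ℕ) (f : ℕ → ℝ) :
    ∑ j ∈ Finset.range (k + 2), (-1 : ℝ) ^ j * ((k+1).choose j : ℝ) * f j
      = ∑ j ∈ Finset.range (k + 1), (-1 : ℝ) ^ j * (k.choose j : ℝ) * (f j - f (j+1)) := by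
  have pascal : ∀ j : ℕ, (((k+1).choose (j+1) : ℕ) : ℝ) = (k.choose j : ℝ) + (k.choose (j+1) : ℝ) := by
    intro j; rw [Nat.choose_succ_succ]; push_cast; ring
  have h1 : ∑ j ∈ Finset.range (k + 1), (-1:ℝ)^j * (k.choose (j+1) : ℝ) * f (j+1)
      = f 0 - ∑ j ∈ Finset.range (k + 1), (-1:ℝ)^j * (k.choose j : ℝ) * f j := by
    rw [Finset.sum_range_succ' (fun j => (-1:ℝ)^j * (k.choose j : ℝ) * f j) k,
      Finset.sum_range_succ (fun j => (-1:ℝ)^j * (k.choose (j+1) : ℝ) * f (j+1)) k]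
    simp only [Nat.choose_succ_self, Nat.cast_zero, mul_zero, zero_mul, add_zero,
      Nat.choose_zero_right, Nat.cast_one, pow_zero, one_mul, mul_one]
    have hB : ∑ x ∈ Finset.range k, (-1:ℝ)^(x+1) * (k.choose (x+1) : ℝ) * f (x+1)
        = -∑ x ∈ Finset.range k, (-1:ℝ)^x * (k.choose (x+1) : ℝ) * f (x+1) := by
      rw [← Finset.sum_neg_distrib]; exact Finset.sum_congr rfl fun x _ => by ring
    rw [hB]; ring
  have key : ∀ j ∈ Finset.range (k+1),
      (-1:ℝ)^(j+1) * (((k+1).choose (j+1) : ℕ) : ℝ) * f (j+1)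
        = -((-1:ℝ)^j * (k.choose j : ℝ) * f (j+1)) + -((-1:ℝ)^j * (k.choose (j+1) : ℝ) * f (j+1)) := by
    intro j _; rw [pascal j]; ring
  rw [Finset.sum_range_succ' (fun j => (-1:ℝ)^j * ((k+1).choose j : ℝ) * f j) (k+1),
    Finset.sum_congr rfl key, Finset.sum_add_distrib]
  simp only [Finset.sum_neg_distrib, h1, Nat.choose_zero_right, Nat.cast_one, pow_zero, one_mul, mul_one]
  rw [show ∑ j ∈ Finset.range (k+1), (-1:ℝ)^j * (k.choose j : ℝ) * (f j - f (j+1))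
      = ∑ j ∈ Finset.range (k+1), (-1:ℝ)^j * (k.choose j : ℝ) * f j
        - ∑ j ∈ Finset.range (k+1), (-1:ℝ)^j * (k.choose j : ℝ) * f (j+1) by
    rw [← Finset.sum_sub_distrib]; exact Finset.sum_congr rfl fun x _ => by ring]
  ring

lemma alt_sum_choose_pow : ∀ d k : ℕ, d < k →
    ∑ j ∈ Finset.range (k+1), (-1:ℝ)^j * (k.choose j : ℝ) * (j:ℝ)^d = 0 := by
  intro d
  induction d using Nat.strong_induction_on with
  | _ d ih =>
    intro k hdk
    obtain ⟨k, rfl⟩ : ∃ k', k = k' + 1 := ⟨k-1, by omega⟩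
    rw [show k + 1 + 1 = k + 2 from rfl] at *
    rw [alt_diff_step k (fun j => ((j:ℕ):ℝ)^d)]
    rcases Nat.eq_zero_or_pos d with hd | hd
    · subst hd; simp
    · have hdiff : ∀ j : ℕ, ((j:ℝ))^d - (((j+1:ℕ)):ℝ)^d
          = ∑ e ∈ Finset.range d, -((d.choose e : ℝ) * (j:ℝ)^e) := by
        intro j
        have h := add_pow (j:ℝ) 1 d
        rw [Finset.sum_range_succ] at h
        simp only [one_pow, mul_one, Nat.choose_self, Nat.cast_one, pow_zero] at h
        have hAB : ∑ x ∈ Finset.range d, (j:ℝ)^x * (d.choose x : ℝ)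
            = ∑ e ∈ Finset.range d, (d.choose e : ℝ) * (j:ℝ)^e :=
          Finset.sum_congr rfl fun e _ => mul_comm _ _
        push_cast
        rw [h, hAB, Finset.sum_neg_distrib]
        ring
      calc ∑ j ∈ Finset.range (k+1), (-1:ℝ)^j * (k.choose j : ℝ) * (((j:ℕ):ℝ)^d - (((j+1:ℕ)):ℝ)^d)
          = ∑ j ∈ Finset.range (k+1), ∑ e ∈ Finset.range d,
              -((-1:ℝ)^j * (k.choose j : ℝ) * ((d.choose e : ℝ) * (j:ℝ)^e)) := by
            refine Finset.sum_congr rfl fun j _ => ?_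
            rw [hdiff j, Finset.mul_sum]
            exact Finset.sum_congr rfl fun e _ => by ring
        _ = ∑ e ∈ Finset.range d, ∑ j ∈ Finset.range (k+1),
              -((-1:ℝ)^j * (k.choose j : ℝ) * ((d.choose e : ℝ) * (j:ℝ)^e)) := Finset.sum_comm
        _ = 0 := by
            apply Finset.sum_eq_zero
            intro e he
            have he' := Finset.mem_range.mp he
            have inner : ∑ j ∈ Finset.range (k+1),
                -((-1:ℝ)^j * (k.choose j : ℝ) * ((d.choose e : ℝ) * (j:ℝ)^e))
                = -((d.choose e : ℝ) * ∑ j ∈ Finset.range (k+1),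
                    (-1:ℝ)^j * (k.choose j : ℝ) * (j:ℝ)^e) := by
              rw [Finset.mul_sum, ← Finset.sum_neg_distrib]
              exact Finset.sum_congr rfl fun j _ => by ring
            rw [inner, ih e he' k (by omega)]
            ring

lemma genStirling_eq_zero (α : ℝ) (n k : ℕ) (h : n < k) : genStirling α n k = 0 := by
  unfold genStirling
  suffices hs : ∑ j ∈ Finset.range (k+1), (-1:ℝ)^j * (k.choose j : ℝ)
      * ∏ i ∈ Finset.range n, (-(j:ℝ)*α + i) = 0 by rw [hs]; ring
  set p : Polynomial ℝ := ∏ i ∈ Finset.range n, (Polynomial.C (i:ℝ) - Polynomial.C α * Polynomial.X) with hp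
  have hev : ∀ j : ℕ, ∏ i ∈ Finset.range n, (-(j:ℝ)*α + i) = p.eval (j:ℝ) := by
    intro j
    rw [hp, Polynomial.eval_prod]
    exact Finset.prod_congr rfl fun i _ => by simp; ring
  have hdeg : p.natDegree ≤ n := by
    refine le_trans (Polynomial.natDegree_prod_le _ _) ?_
    calc ∑ i ∈ Finset.range n, (Polynomial.C (i:ℝ) - Polynomial.C α * Polynomial.X).natDegree
        ≤ ∑ _i ∈ Finset.range n, 1 := by
          refine Finset.sum_le_sum fun i _ => ?_
          refine le_trans (Polynomial.natDegree_sub_le _ _) (max_le (by simp) ?_)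
          exact le_trans Polynomial.natDegree_mul_le (by simp)
      _ = n := by simp
  calc ∑ j ∈ Finset.range (k+1), (-1:ℝ)^j * (k.choose j : ℝ) * ∏ i ∈ Finset.range n, (-(j:ℝ)*α + i)
      = ∑ j ∈ Finset.range (k+1), ∑ m ∈ Finset.range (p.natDegree + 1),
          p.coeff m * ((-1:ℝ)^j * (k.choose j : ℝ) * (j:ℝ)^m) := by
        refine Finset.sum_congr rfl fun j _ => ?_
        rw [hev j, Polynomial.eval_eq_sum_range, Finset.mul_sum]
        exact Finset.sum_congr rfl fun m _ => by ring
    _ = ∑ m ∈ Finset.range (p.natDegree + 1), ∑ j ∈ Finset.range (k+1),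
          p.coeff m * ((-1:ℝ)^j * (k.choose j : ℝ) * (j:ℝ)^m) := Finset.sum_comm
    _ = 0 := by
        apply Finset.sum_eq_zero
        intro m hm
        have hm' : m < k := by
          have := Finset.mem_range.mp hm; omega
        rw [← Finset.mul_sum, alt_sum_choose_pow m k hm', mul_zero]

lemma genStirling_zero_right (α : ℝ) (n : ℕ) (hn : 1 ≤ n) : genStirling α n 0 = 0 := by
  obtain ⟨m, rfl⟩ : ∃ m, n = m + 1 := ⟨n-1, by omega⟩
  simp [genStirling, Finset.prod_range_succ']

lemma genStirling_one_one (α : ℝ) (hα : α ≠ 0) : genStirling α 1 1 = 1 := by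
  simp [genStirling, Finset.sum_range_succ, Finset.prod_range_succ]
  field_simp

lemma genStirling_rec (α : ℝ) (hα : α ≠ 0) (n m : ℕ) :
    genStirling α (n+1) (m+1)
      = genStirling α n m + ((n:ℝ) - ((m:ℝ)+1)*α) * genStirling α n (m+1) := by
  have hscalar : ∀ j ∈ Finset.range (m+2),
      (((m+1).choose j : ℕ) : ℝ) * (-(j:ℝ)*α + (n:ℝ))
        = α * ((m:ℝ)+1) * (m.choose j : ℝ)
          + ((n:ℝ) - ((m:ℝ)+1)*α) * (((m+1).choose j : ℕ) : ℝ) := by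
    intro j hj
    have hj' : j ≤ m + 1 := by have := Finset.mem_range.mp hj; omega
    have hnat : (m+1) * Nat.choose m j = Nat.choose (m+1) j * (m+1-j) := by
      rw [Nat.add_one_mul_choose_eq, Nat.choose_succ_right_eq]
    have hreal : ((m:ℝ)+1) * (m.choose j : ℝ) = (((m+1).choose j : ℕ) : ℝ) * (((m:ℝ)+1) - (j:ℝ)) := by
      have := congrArg (fun x : ℕ => (x : ℝ)) hnat
      push_cast [Nat.cast_sub hj'] at this
      push_cast
      linarith
    linear_combination (-α) * hreal
  have hT0 : ∑ j ∈ Finset.range (m+1), (-1:ℝ)^j * (m.choose j : ℝ) * ∏ i ∈ Finset.range n, (-(j:ℝ)*α + i)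
      = ∑ j ∈ Finset.range (m+2), (-1:ℝ)^j * (m.choose j : ℝ) * ∏ i ∈ Finset.range n, (-(j:ℝ)*α + i) := by
    rw [Finset.sum_range_succ (fun j => (-1:ℝ)^j * (m.choose j : ℝ) * ∏ i ∈ Finset.range n, (-(j:ℝ)*α + i)) (m+1)]
    simp [Nat.choose_succ_self]
  have key : ∑ j ∈ Finset.range (m+2), (-1:ℝ)^j * (((m+1).choose j : ℕ) : ℝ) * ∏ i ∈ Finset.range (n+1), (-(j:ℝ)*α + i)
      = α * ((m:ℝ)+1) * ∑ j ∈ Finset.range (m+1), (-1:ℝ)^j * (m.choose j : ℝ) * ∏ i ∈ Finset.range n, (-(j:ℝ)*α + i)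
        + ((n:ℝ) - ((m:ℝ)+1)*α) * ∑ j ∈ Finset.range (m+2), (-1:ℝ)^j * (((m+1).choose j : ℕ) : ℝ) * ∏ i ∈ Finset.range n, (-(j:ℝ)*α + i) := by
    rw [hT0, Finset.mul_sum, Finset.mul_sum, ← Finset.sum_add_distrib]
    refine Finset.sum_congr rfl fun j hj => ?_
    rw [Finset.prod_range_succ]
    linear_combination ((-1:ℝ)^j * ∏ i ∈ Finset.range n, (-(j:ℝ)*α + i)) * hscalar j hj
  unfold genStirling
  rw [show m + 1 + 1 = m + 2 from rfl, key]
  have hfac : ((m+1).factorial : ℝ) = ((m:ℝ)+1) * (m.factorial : ℝ) := by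
    rw [Nat.factorial_succ]; push_cast; ring
  have h1 : (m.factorial : ℝ) ≠ 0 := Nat.cast_ne_zero.mpr (Nat.factorial_ne_zero m)
  have h2 : (α : ℝ) ^ m ≠ 0 := pow_ne_zero _ hα
  have h3 : ((m:ℝ)+1) ≠ 0 := by positivity
  rw [hfac]
  rw [pow_succ]
  field_simp

lemma sum_Icc_one_eq (m : ℕ) (F : ℕ → ℝ) :
    ∑ k ∈ Finset.Icc 1 m, F k = ∑ j ∈ Finset.range m, F (j+1) := by
  rw [show Finset.Icc 1 m = Finset.Ico 1 (m+1) by rw [Finset.Ico_add_one_right_eq_Icc],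
    Finset.sum_Ico_eq_sum_range]
  simp only [Nat.add_sub_cancel]
  exact Finset.sum_congr rfl fun i _ => by rw [Nat.add_comm]

/-- derivatives of the stretched exponential:
dⁿ/dγⁿ e^{−γ^α} = (−1)ⁿ e^{−γ^α} Σ_{k=1}^n α^k S_α(n,k) γ^{kα−n}, for γ > 0. -/
theorem iteratedDeriv_stretched_exp (α : ℝ) (hα₀ : 0 < α) (hα₁ : α < 1)
    (n : ℕ) (hn : 1 ≤ n) (γ : ℝ) (hγ : 0 < γ) :
    iteratedDeriv n (fun t : ℝ => Real.exp (-(t ^ α))) γ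
      = (-1 : ℝ) ^ n * Real.exp (-(γ ^ α)) *
          ∑ k ∈ Finset.Icc 1 n,
            α ^ k * genStirling α n k * γ ^ ((k : ℝ) * α - n) := by
  have hα : α ≠ 0 := ne_of_gt hα₀
  have hexp : ∀ x : ℝ, 0 < x → HasDerivAt (fun t : ℝ => Real.exp (-(t ^ α)))
      (Real.exp (-(x ^ α)) * (-(α * x ^ (α - 1)))) x := by
    intro x hx
    exact ((Real.hasDerivAt_rpow_const (Or.inl hx.ne')).neg).exp
  revert γ
  induction n, hn using Nat.le_induction with
  | base =>
    intro γ hγ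
    rw [iteratedDeriv_one, (hexp γ hγ).deriv]
    rw [show Finset.Icc 1 1 = {1} from rfl, Finset.sum_singleton,
      genStirling_one_one α hα]
    norm_num
  | succ n hn ih =>
    intro γ hγ
    rw [iteratedDeriv_succ]
    have hEq : deriv (iteratedDeriv n (fun t : ℝ => Real.exp (-(t ^ α)))) γ
        = deriv (fun t : ℝ => (-1:ℝ)^n * Real.exp (-(t^α)) *
            ∑ k ∈ Finset.Icc 1 n, α^k * genStirling α n k * t ^ ((k:ℝ)*α - n)) γ := by
      apply Filter.EventuallyEq.deriv_eq
      filter_upwards [IsOpen.mem_nhds isOpen_Ioi hγ] with t ht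
      exact ih t ht
    rw [hEq]
    have hsum : HasDerivAt (fun t : ℝ => ∑ k ∈ Finset.Icc 1 n,
          α^k * genStirling α n k * t ^ ((k:ℝ)*α - n))
        (∑ k ∈ Finset.Icc 1 n, α^k * genStirling α n k *
          (((k:ℝ)*α - n) * γ ^ ((k:ℝ)*α - n - 1))) γ := by
      apply HasDerivAt.fun_sum
      intro k _
      exact (Real.hasDerivAt_rpow_const (Or.inl hγ.ne')).const_mul _
    have hg' : HasDerivAt (fun t : ℝ => (-1:ℝ)^n * Real.exp (-(t^α)) *
          ∑ k ∈ Finset.Icc 1 n, α^k * genStirling α n k * t ^ ((k:ℝ)*α - n))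
        ((-1:ℝ)^n * (Real.exp (-(γ^α)) * (-(α * γ ^ (α - 1))) *
            (∑ k ∈ Finset.Icc 1 n, α^k * genStirling α n k * γ ^ ((k:ℝ)*α - n))
          + Real.exp (-(γ^α)) * ∑ k ∈ Finset.Icc 1 n, α^k * genStirling α n k *
            (((k:ℝ)*α - n) * γ ^ ((k:ℝ)*α - n - 1)))) γ := by
      have h := ((hexp γ hγ).mul hsum).const_mul ((-1:ℝ)^n)
      simpa [mul_assoc] using h
    rw [hg'.deriv]
    have hS0 : genStirling α n 0 = 0 := genStirling_zero_right α n hn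
    have hSn1 : genStirling α n (n+1) = 0 := genStirling_eq_zero α n (n+1) (by omega)
    have hT : ∑ k ∈ Finset.Icc 1 (n+1), α ^ k * genStirling α (n+1) k * γ ^ ((k : ℝ) * α - ((n+1 : ℕ) : ℝ))
        = α * γ ^ (α - 1) *
            ∑ k ∈ Finset.Icc 1 n, α ^ k * genStirling α n k * γ ^ ((k : ℝ) * α - (n : ℝ))
          - ∑ k ∈ Finset.Icc 1 n, α ^ k * genStirling α n k *
              (((k : ℝ) * α - (n : ℝ)) * γ ^ ((k : ℝ) * α - (n : ℝ) - 1)) := by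
      rw [sum_Icc_one_eq (n+1) (fun k => α ^ k * genStirling α (n+1) k * γ ^ ((k : ℝ) * α - ((n+1 : ℕ) : ℝ))),
        sum_Icc_one_eq n (fun k => α ^ k * genStirling α n k * γ ^ ((k : ℝ) * α - (n : ℝ))),
        sum_Icc_one_eq n (fun k => α ^ k * genStirling α n k *
          (((k : ℝ) * α - (n : ℝ)) * γ ^ ((k : ℝ) * α - (n : ℝ) - 1)))]
      have e1 : ∀ j ∈ Finset.range (n+1),
          α ^ (j+1) * genStirling α (n+1) (j+1) * γ ^ (((j+1 : ℕ) : ℝ) * α - ((n+1 : ℕ) : ℝ))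
            = α * γ ^ (α - 1) * (α ^ j * genStirling α n j * γ ^ ((j : ℝ) * α - (n : ℝ)))
              + α ^ (j+1) * genStirling α n (j+1) * (((n:ℝ)) - ((j:ℝ)+1) * α) *
                  γ ^ (((j+1 : ℕ) : ℝ) * α - ((n+1 : ℕ) : ℝ)) := by
        intro j _
        rw [genStirling_rec α hα n j]
        rw [show ((j+1 : ℕ) : ℝ) * α - ((n+1 : ℕ) : ℝ) = (α - 1) + ((j : ℝ) * α - (n : ℝ)) by
          push_cast; ring]
        rw [Real.rpow_add hγ]
        ring
      rw [Finset.sum_congr rfl e1, Finset.sum_add_distrib]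
      congr 1
      · rw [Finset.sum_range_succ'
          (fun j => α * γ ^ (α - 1) * (α ^ j * genStirling α n j * γ ^ ((j : ℝ) * α - (n : ℝ)))) n]
        rw [Finset.mul_sum]
        simp [hS0]
      · rw [Finset.sum_range_succ]
        simp only [hSn1, mul_zero, zero_mul, add_zero]
        rw [← Finset.sum_neg_distrib]
        refine Finset.sum_congr rfl fun j _ => ?_
        rw [show ((j+1 : ℕ) : ℝ) * α - ((n+1 : ℕ) : ℝ) = ((j+1 : ℕ) : ℝ) * α - (n : ℝ) - 1 by
          push_cast; ring]
        push_cast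
        ring
    rw [hT]
    ring
end
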